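/- For every integer k ≥ 2 and every i ∈ {0,…,k}, the corner submatrices 𝒢_{2^k,2^i} and 𝒢̄_{2^k,2^i} are diagonal in the Hadamard basis; in particular, H_k · 𝒢_{2^k} · H_k is a diagonal matrix. -/
import Mathlib


/-- `tilde k i` is the vector `ĩ_k ∈ {1,−1}^k`: the k-digit binary representation of
`i` (most significant digit first) with digit 0 replaced by 1 and digit 1 by −1. -/
def tilde (k : ℕ) (i : Fin (2 ^ k)) : Fin k → ℝ :=
  fun t => if Nat.testBit i.val (k - 1 - t.val) then -1 else 1

/-- The game matrix `𝒢_{2^k}` with entries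
`(𝒢_{2^k})_{i,j} = (1, ĩ_k) ⋆ (−1, j̃_k) = sign(ĩ_k · j̃_k − 1)`. -/
noncomputable def gameMatrix (k : ℕ) : Matrix (Fin (2 ^ k)) (Fin (2 ^ k)) ℝ :=
  Matrix.of fun i j => Real.sign ((∑ t, tilde k i t * tilde k j t) - 1)

/-- `𝒢_{2^k,x}`: the top-left `x × x` corner submatrix of `𝒢_{2^k}`. -/
noncomputable def cornerTL (k x : ℕ) (h : x ≤ 2 ^ k) : Matrix (Fin x) (Fin x) ℝ :=
  Matrix.of fun i j =>
    gameMatrix k ⟨i.val, lt_of_lt_of_le i.isLt h⟩ ⟨j.val, lt_of_lt_of_le j.isLt h⟩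

/-- `𝒢̄_{2^k,x}`: the top-right `x × x` corner submatrix of `𝒢_{2^k}`
(rows `1,…,x`, columns `2^k−x+1,…,2^k`). -/
noncomputable def cornerTR (k x : ℕ) (h : x ≤ 2 ^ k) : Matrix (Fin x) (Fin x) ℝ :=
  Matrix.of fun i j =>
    gameMatrix k ⟨i.val, lt_of_lt_of_le i.isLt h⟩
      ⟨2 ^ k - x + j.val, by omega⟩

/-- The canonical equivalence `Fin (2^m) ⊕ Fin (2^m) ≃ Fin (2^(m+1))`. -/
def finPowEquiv (m : ℕ) : Fin (2 ^ m) ⊕ Fin (2 ^ m) ≃ Fin (2 ^ (m + 1)) :=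
  finSumFinEquiv.trans (finCongr (by rw [pow_succ, mul_two]))

/-- The `2 × 2` block matrix `[[W,X],[Y,Z]]` with blocks of size `2^m × 2^m`,
as a `2^(m+1) × 2^(m+1)` matrix. -/
noncomputable def blk {m : ℕ} (W X Y Z : Matrix (Fin (2 ^ m)) (Fin (2 ^ m)) ℝ) :
    Matrix (Fin (2 ^ (m + 1))) (Fin (2 ^ (m + 1))) ℝ :=
  Matrix.reindex (finPowEquiv m) (finPowEquiv m) (Matrix.fromBlocks W X Y Z)

/-- The Hadamard matrix `H_m`, defined recursively by `H_0 = (1)` and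
`H_{m+1} = (1/√2)[[H_m, H_m],[H_m, −H_m]]`. -/
noncomputable def Had : (m : ℕ) → Matrix (Fin (2 ^ m)) (Fin (2 ^ m)) ℝ
  | 0 => Matrix.of fun _ _ => 1
  | m + 1 => (Real.sqrt 2)⁻¹ • blk (Had m) (Had m) (Had m) (-(Had m))

section auxLemmas

set_option maxHeartbeats 1000000

/-- Adding a high part (a multiple of `2^i`) commutes with xor of low parts. -/
lemma xor_add_aux {i : ℕ} (q : ℕ) {a b : ℕ} (ha : a < 2^i) (hb : b < 2^i) :
    a ^^^ (2^i*q + b) = 2^i*q + (a ^^^ b) := by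
  apply Nat.eq_of_testBit_eq
  intro j
  rcases lt_or_ge j i with hj | hj
  · rw [Nat.testBit_xor, Nat.testBit_two_pow_mul_add q hb j,
      Nat.testBit_two_pow_mul_add q (Nat.xor_lt_two_pow ha hb) j, if_pos hj, if_pos hj,
      Nat.testBit_xor]
  · rw [Nat.testBit_xor, Nat.testBit_two_pow_mul_add q hb j,
      Nat.testBit_two_pow_mul_add q (Nat.xor_lt_two_pow ha hb) j, if_neg (not_lt.2 hj),
      if_neg (not_lt.2 hj),
      Nat.testBit_lt_two_pow (lt_of_lt_of_le ha (Nat.pow_le_pow_right two_pos hj))]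
    simp

lemma xor_xor_aux (x y z : ℕ) : (x ^^^ y) ^^^ (x ^^^ z) = y ^^^ z := by
  apply Nat.eq_of_testBit_eq
  intro j
  simp only [Nat.testBit_xor]
  cases x.testBit j <;> cases y.testBit j <;> cases z.testBit j <;> rfl

lemma blk_mul {m : ℕ} (W X Y Z W' X' Y' Z' : Matrix (Fin (2^m)) (Fin (2^m)) ℝ) :
    blk W X Y Z * blk W' X' Y' Z' =
      blk (W*W' + X*Y') (W*X' + X*Z') (Y*W' + Z*Y') (Y*X' + Z*Z') := by
  unfold blk
  rw [Matrix.reindex_apply, Matrix.reindex_apply, Matrix.reindex_apply,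
    Matrix.submatrix_mul_equiv, Matrix.fromBlocks_multiply]

lemma smul_blk {m : ℕ} (c : ℝ) (W X Y Z : Matrix (Fin (2^m)) (Fin (2^m)) ℝ) :
    c • blk W X Y Z = blk (c•W) (c•X) (c•Y) (c•Z) := by
  unfold blk
  rw [Matrix.reindex_apply, Matrix.reindex_apply, ← Matrix.fromBlocks_smul,
    Matrix.submatrix_smul]
  rfl

lemma blk_isDiag {m : ℕ} {D D' : Matrix (Fin (2^m)) (Fin (2^m)) ℝ}
    (h : D.IsDiag) (h' : D'.IsDiag) : (blk D 0 0 D').IsDiag := by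
  intro i j hij
  show Matrix.fromBlocks D 0 0 D' ((finPowEquiv m).symm i) ((finPowEquiv m).symm j) = 0
  exact h.fromBlocks h'
    (fun hc => hij (by simpa using congrArg (finPowEquiv m) hc))

lemma finPowEquiv_inl (m : ℕ) (a : Fin (2^m)) :
    (finPowEquiv m (Sum.inl a)).val = a.val := by
  simp [finPowEquiv]

lemma finPowEquiv_inr (m : ℕ) (a : Fin (2^m)) :
    (finPowEquiv m (Sum.inr a)).val = 2^m + a.val := by
  simp [finPowEquiv]
  omega

/-- Main lemma: any `2^m × 2^m` matrix whose entries depend only on the xor of the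
(indices of the) row and column is diagonal in the Hadamard basis. -/
lemma xor_diag : ∀ (m : ℕ) (f : ℕ → ℝ),
    (Had m * Matrix.of (fun a b : Fin (2^m) => f (a.val ^^^ b.val)) * Had m).IsDiag := by
  intro m
  induction m with
  | zero =>
    intro f i j hij
    exfalso
    apply hij
    apply Fin.ext
    have hi := i.isLt
    have hj := j.isLt
    simp only [pow_zero] at hi hj
    omega
  | succ m ih =>
    intro f
    have h2 : ∀ x : Fin (2^m), 2^m + x.val = 2^m ^^^ x.val := by
      intro x
      have h := xor_add_aux (i := m) 1 x.isLt (Nat.two_pow_pos m)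
      simp only [mul_one, Nat.add_zero, Nat.xor_zero] at h
      rw [← h, Nat.xor_comm]
    have hM : Matrix.of (fun a b : Fin (2^(m+1)) => f (a.val ^^^ b.val)) =
        blk (Matrix.of (fun a b : Fin (2^m) => f (a.val ^^^ b.val)))
          (Matrix.of (fun a b : Fin (2^m) => f (2^m + (a.val ^^^ b.val))))
          (Matrix.of (fun a b : Fin (2^m) => f (2^m + (a.val ^^^ b.val))))
          (Matrix.of (fun a b : Fin (2^m) => f (a.val ^^^ b.val))) := by
      ext i j
      obtain ⟨a, rfl⟩ : ∃ s, finPowEquiv m s = i := ⟨_, (finPowEquiv m).apply_symm_apply i⟩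
      obtain ⟨b, rfl⟩ : ∃ s, finPowEquiv m s = j := ⟨_, (finPowEquiv m).apply_symm_apply j⟩
      show f _ = (Matrix.fromBlocks _ _ _ _)
        ((finPowEquiv m).symm (finPowEquiv m a)) ((finPowEquiv m).symm (finPowEquiv m b))
      rw [Equiv.symm_apply_apply, Equiv.symm_apply_apply]
      rcases a with a | a <;> rcases b with b | b <;>
        simp only [Matrix.fromBlocks_apply₁₁, Matrix.fromBlocks_apply₁₂,
          Matrix.fromBlocks_apply₂₁, Matrix.fromBlocks_apply₂₂,
          finPowEquiv_inl, finPowEquiv_inr, Matrix.of_apply]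
      · rw [show 2^m + b.val = 2^m*1 + b.val by ring,
          xor_add_aux 1 a.isLt b.isLt, mul_one]
      · rw [Nat.xor_comm, show 2^m + a.val = 2^m*1 + a.val by ring,
          xor_add_aux 1 b.isLt a.isLt, mul_one, Nat.xor_comm a.val b.val]
      · rw [h2 a, h2 b, xor_xor_aux]
    rw [hM]
    rw [show Had (m+1) = (Real.sqrt 2)⁻¹ • blk (Had m) (Had m) (Had m) (-(Had m)) from rfl]
    rw [Matrix.smul_mul, Matrix.mul_smul, Matrix.smul_mul, smul_smul]
    have hc : (Real.sqrt 2)⁻¹ * (Real.sqrt 2)⁻¹ = 2⁻¹ := by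
      rw [← mul_inv, Real.mul_self_sqrt (by norm_num)]
    rw [hc]
    set H := Had m with hH
    set A : Matrix (Fin (2^m)) (Fin (2^m)) ℝ :=
      Matrix.of (fun a b : Fin (2^m) => f (a.val ^^^ b.val)) with hA
    set B : Matrix (Fin (2^m)) (Fin (2^m)) ℝ :=
      Matrix.of (fun a b : Fin (2^m) => f (2^m + (a.val ^^^ b.val))) with hB
    have key : blk H H H (-H) * blk A B B A * blk H H H (-H)
        = blk (H*(A+B)*H + H*(A+B)*H) 0 0 (H*(A-B)*H + H*(A-B)*H) := by
      rw [blk_mul, blk_mul]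
      noncomm_ring
    rw [key, smul_blk, smul_zero]
    have half : ∀ X : Matrix (Fin (2^m)) (Fin (2^m)) ℝ, (2⁻¹:ℝ) • (X + X) = X := by
      intro X
      rw [smul_add, ← add_smul]
      norm_num
    rw [half, half]
    have hsum : A + B = Matrix.of (fun a b : Fin (2^m) =>
        (fun x => f x + f (2^m + x)) (a.val ^^^ b.val)) := rfl
    have hsub : A - B = Matrix.of (fun a b : Fin (2^m) =>
        (fun x => f x - f (2^m + x)) (a.val ^^^ b.val)) := rfl
    rw [hsum, hsub]
    exact blk_isDiag (ih (fun x => f x + f (2^m + x))) (ih (fun x => f x - f (2^m + x)))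

/-- The entry function of the game matrix, as a function of the xor of the indices. -/
noncomputable def gf (k : ℕ) (x : ℕ) : ℝ :=
  Real.sign ((∑ t : Fin k, if Nat.testBit x (k - 1 - t.val) then (-1:ℝ) else 1) - 1)

lemma game_apply (k : ℕ) (a b : Fin (2^k)) :
    gameMatrix k a b = gf k (a.val ^^^ b.val) := by
  unfold gameMatrix gf tilde
  simp only [Matrix.of_apply]
  congr 2
  apply Finset.sum_congr rfl
  intro t _
  rw [Nat.testBit_xor]
  cases h1 : a.val.testBit (k - 1 - t.val) <;> cases h2 : b.val.testBit (k - 1 - t.val) <;>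
    norm_num

end auxLemmas

set_option maxHeartbeats 1000000 in
/-- For every integer `k ≥ 2` and every `i ∈ {0,…,k}`, the corner
submatrices `𝒢_{2^k,2^i}` and `𝒢̄_{2^k,2^i}` are diagonal in the Hadamard basis;
in particular, `H_k · 𝒢_{2^k} · H_k` is a diagonal matrix. -/
theorem stmt_19 (k : ℕ) (hk : 2 ≤ k) :
    (∀ i, ∀ hi : i ≤ k,
      (Had i * cornerTL k (2 ^ i) (Nat.pow_le_pow_right (by norm_num) hi) * Had i).IsDiag ∧
      (Had i * cornerTR k (2 ^ i) (Nat.pow_le_pow_right (by norm_num) hi) * Had i).IsDiag) ∧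
    (Had k * gameMatrix k * Had k).IsDiag := by
  constructor
  · intro i hi
    constructor
    · have h : cornerTL k (2^i) (Nat.pow_le_pow_right (by norm_num) hi)
          = Matrix.of (fun a b : Fin (2^i) => gf k (a.val ^^^ b.val)) := by
        ext a b
        exact game_apply k _ _
      rw [h]
      exact xor_diag i (gf k)
    · have h2 : 2^k - 2^i = 2^i * (2^(k-i) - 1) := by
        rw [Nat.mul_sub, mul_one, ← pow_add, Nat.add_sub_cancel' hi]
      have h : cornerTR k (2^i) (Nat.pow_le_pow_right (by norm_num) hi)
          = Matrix.of (fun a b : Fin (2^i) =>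
              (fun x => gf k (2^k - 2^i + x)) (a.val ^^^ b.val)) := by
        ext a b
        simp only [cornerTR, Matrix.of_apply]
        rw [game_apply]
        simp only
        rw [h2, xor_add_aux _ a.isLt b.isLt]
      rw [h]
      exact xor_diag i (fun x => gf k (2^k - 2^i + x))
  · have h : gameMatrix k = Matrix.of (fun a b : Fin (2^k) => gf k (a.val ^^^ b.val)) := by
      ext a b
      exact game_apply k a b
    rw [h]
    exact xor_diag k (gf k)
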